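/- Let N : (0, r₀] → ℝ and suppose: (a) N(0) := lim_{r↓0} N(r) exists; (b) there are constants k > 0 and α ∈ (0,1) such that for every R ∈ (0, r₀] and every r ∈ (R/4, R), N(R) - N(r) ≥ -k R^{α-1} (R - r). Then there is a constant C = C(k, α) > 0 such that N(r) - N(0) ≥ -C r^{α} for all r ∈ (0, r₀]. -/

import Mathlib

open MeasureTheory Metric Filter Set
open scoped ENNReal NNReal Topology RealInnerProductSpace

noncomputable section

abbrev E (n : ℕ) := EuclideanSpace ℝ (Fin n)

/-- The Laplacian of `f : ℝⁿ → ℝ`, as the sum of second partial derivatives. -/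
def lap (n : ℕ) (f : E n → ℝ) (x : E n) : ℝ :=
  ∑ i : Fin n, fderiv ℝ (fun y => fderiv ℝ f y (EuclideanSpace.single i 1)) x
    (EuclideanSpace.single i 1)

/-- The Weiss-type functional
`W_d(r,Q,f) = r^{-(n-2+2d)} ∫_{B(Q,r)} |∇f|² - d r^{-(n-1+2d)} ∫_{∂B(Q,r)} f² dσ`,
with surface measure given by the `(n-1)`-dimensional Hausdorff measure. -/
def weiss (n : ℕ) (d r : ℝ) (Q : E n) (f : E n → ℝ) : ℝ :=
  (1 / r ^ ((n : ℝ) - 2 + 2 * d)) * (∫ x in ball Q r, ‖gradient f x‖ ^ 2)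
    - (d / r ^ ((n : ℝ) - 1 + 2 * d)) * ∫ x in sphere Q r, (f x) ^ 2 ∂μH[(n : ℝ) - 1]

/-- Dyadic chaining argument (Theorem 4.4): an almost-monotonicity estimate at comparable
scales upgrades to a power-rate lower bound `N(r) - N(0) ≥ -C r^α`. -/
theorem stmt_19 (N : ℝ → ℝ) (r₀ : ℝ) (hr₀ : 0 < r₀) (N0 : ℝ)
    (hlim : Tendsto N (𝓝[>] 0) (𝓝 N0))
    (k α : ℝ) (hk : 0 < k) (hα : α ∈ Set.Ioo (0 : ℝ) 1)
    (hb : ∀ R ∈ Set.Ioc (0 : ℝ) r₀, ∀ r ∈ Set.Ioo (R / 4) R,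
      N R - N r ≥ -(k * R ^ (α - 1) * (R - r))) :
    ∃ C : ℝ, 0 < C ∧ ∀ r ∈ Set.Ioc (0 : ℝ) r₀, N r - N0 ≥ -(C * r ^ α) := by
  obtain ⟨hα0, hα1⟩ := hα
  set c : ℝ := (1 / 2 : ℝ) ^ α with hc_def
  have hc0 : 0 < c := Real.rpow_pos_of_pos (by norm_num) α
  have hc1 : c < 1 := by
    have := Real.rpow_lt_one (by norm_num : (0:ℝ) ≤ 1/2) (by norm_num : (1/2:ℝ) < 1) hα0
    exact this
  have h1c : 0 < 1 - c := by linarith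
  refine ⟨k / 2 * (1 / (1 - c)), by positivity, ?_⟩
  rintro r ⟨hr0, hrr₀⟩
  -- one dyadic step
  have step : ∀ R : ℝ, 0 < R → R ≤ r₀ → N R - N (R / 2) ≥ -(k / 2 * R ^ α) := by
    intro R hR hRr₀
    have h1 : N R - N (R / 2) ≥ -(k * R ^ (α - 1) * (R - R / 2)) := by
      apply hb R ⟨hR, hRr₀⟩
      constructor <;> [linarith; linarith]
    have h2 : k * R ^ (α - 1) * (R - R / 2) = k / 2 * R ^ α := by
      rw [Real.rpow_sub_one hR.ne']
      field_simp
      ring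
    linarith [h1, h2.ge, h2.le]
  -- (r / 2^m)^α = r^α * c^m
  have hpow : ∀ m : ℕ, (r / 2 ^ m) ^ α = r ^ α * c ^ m := by
    intro m
    have h2m : (0:ℝ) < 2 ^ m := by positivity
    have : r / 2 ^ m = r * (1 / 2 : ℝ) ^ m := by
      field_simp
      rw [← mul_pow]; norm_num
    rw [this, Real.mul_rpow hr0.le (by positivity),
      ← Real.rpow_natCast ((1/2:ℝ)) m, ← Real.rpow_natCast c m, hc_def,
      ← Real.rpow_mul (by norm_num), ← Real.rpow_mul (by norm_num), mul_comm α (m:ℝ)]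
  -- telescoping
  have tele : ∀ m : ℕ, N r - N (r / 2 ^ m) ≥
      -(k / 2 * r ^ α * ∑ ℓ ∈ Finset.range m, c ^ ℓ) := by
    intro m
    induction m with
    | zero => simp
    | succ m ih =>
      have hrm : 0 < r / 2 ^ m := by positivity
      have hrm' : r / 2 ^ m ≤ r₀ := by
        calc r / 2 ^ m ≤ r / 1 := by
              apply div_le_div_of_nonneg_left hr0.le one_pos (one_le_pow₀ (by norm_num))
          _ = r := div_one r
          _ ≤ r₀ := hrr₀
      have hstep := step (r / 2 ^ m) hrm hrm'
      have heq : r / 2 ^ m / 2 = r / 2 ^ (m + 1) := by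
        rw [pow_succ]; ring
      rw [heq, hpow m] at hstep
      rw [Finset.sum_range_succ]
      have : N r - N (r / 2 ^ (m + 1)) =
          (N r - N (r / 2 ^ m)) + (N (r / 2 ^ m) - N (r / 2 ^ (m + 1))) := by ring
      rw [this]
      nlinarith [hstep, ih]
  -- bound geometric sum
  have geo : ∀ m : ℕ, ∑ ℓ ∈ Finset.range m, c ^ ℓ ≤ 1 / (1 - c) := by
    intro m
    have hcm : (0:ℝ) ≤ c ^ m := by positivity
    have heq : (c ^ m - 1) / (c - 1) = (1 - c ^ m) / (1 - c) := by
      rw [← neg_div_neg_eq]; ring_nf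
    rw [geom_sum_eq hc1.ne m, heq]
    gcongr
    linarith
  have bound : ∀ m : ℕ, N r - N (r / 2 ^ m) ≥ -(k / 2 * (1 / (1 - c)) * r ^ α) := by
    intro m
    have h := tele m
    have hra : 0 < r ^ α := Real.rpow_pos_of_pos hr0 α
    have := mul_le_mul_of_nonneg_left (geo m) (by positivity : (0:ℝ) ≤ k / 2 * r ^ α)
    nlinarith [this]
  -- limit
  have hlim2 : Tendsto (fun m : ℕ => N (r / 2 ^ m)) atTop (𝓝 N0) := by
    apply hlim.comp
    apply tendsto_nhdsWithin_of_tendsto_nhds_of_eventually_within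
    · have : Tendsto (fun m : ℕ => r / 2 ^ m) atTop (𝓝 0) := by
        simpa using tendsto_const_nhds.div_atTop
          (tendsto_pow_atTop_atTop_of_one_lt (by norm_num : (1:ℝ) < 2))
      exact this
    · exact Eventually.of_forall fun m => mem_Ioi.mpr (by positivity)
  have hfin : Tendsto (fun m : ℕ => N r - N (r / 2 ^ m)) atTop (𝓝 (N r - N0)) :=
    tendsto_const_nhds.sub hlim2
  have := ge_of_tendsto hfin (Eventually.of_forall bound)
  linarith [this]
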